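/- Let $X$ be a Banach space whose modulus of smoothness satisfies $\rho(u) \le \gamma u^q$ for some $1 < q \le 2$ and $\gamma > 0$. Let $\mathcal{D}$ be a dictionary in $X$ and $f \in A_1(\mathcal{D})$ (the closed convex hull of $\mathcal{D}$). Let $p := q/(q-1)$ and $\epsilon_n := \beta \gamma^{1/q} n^{-1/p}$ for a fixed $\beta > 0$. Then the residuals $f_m^{i,\epsilon}$ of the Incremental Algorithm IA($\epsilon$) satisfy $\|f_m^{i,\epsilon}\| \le C(\beta)\gamma^{1/q} m^{-1/p}$ for all $m \ge 1$. -/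

import Mathlib

open scoped ENNReal

private lemma ia_val_le_sup {X : Type*} [NormedAddCommGroup X] [NormedSpace ℝ X]
    (u : ℝ) (hu : 0 < u) (x' y' : {z : X // ‖z‖ = 1}) :
    ((‖x'.1 + u • y'.1‖ + ‖x'.1 - u • y'.1‖) / 2 - 1) ≤
      ⨆ x : {x : X // ‖x‖ = 1}, ⨆ y : {y : X // ‖y‖ = 1},
        ((‖x.1 + u • y.1‖ + ‖x.1 - u • y.1‖) / 2 - 1) := by
  haveI : Nonempty {z : X // ‖z‖ = 1} := ⟨x'⟩
  have hb : ∀ (a b : {z : X // ‖z‖ = 1}),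
      ((‖a.1 + u • b.1‖ + ‖a.1 - u • b.1‖) / 2 - 1) ≤ u := by
    intro a b
    have h1 : ‖a.1 + u • b.1‖ ≤ 1 + u := by
      calc ‖a.1 + u • b.1‖ ≤ ‖a.1‖ + ‖u • b.1‖ := norm_add_le _ _
        _ = 1 + u := by rw [norm_smul, a.2, b.2, Real.norm_of_nonneg hu.le]; ring
    have h2 : ‖a.1 - u • b.1‖ ≤ 1 + u := by
      calc ‖a.1 - u • b.1‖ ≤ ‖a.1‖ + ‖u • b.1‖ := norm_sub_le _ _
        _ = 1 + u := by rw [norm_smul, a.2, b.2, Real.norm_of_nonneg hu.le]; ring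
    linarith
  have hbd1 : BddAbove (Set.range fun b : {z : X // ‖z‖ = 1} =>
      ((‖x'.1 + u • b.1‖ + ‖x'.1 - u • b.1‖) / 2 - 1)) := by
    refine ⟨u, ?_⟩
    rintro _ ⟨b, rfl⟩
    exact hb x' b
  have hbd2 : BddAbove (Set.range fun a : {z : X // ‖z‖ = 1} =>
      ⨆ b : {z : X // ‖z‖ = 1}, ((‖a.1 + u • b.1‖ + ‖a.1 - u • b.1‖) / 2 - 1)) := by
    refine ⟨u, ?_⟩
    rintro _ ⟨a, rfl⟩
    exact ciSup_le fun b => hb a b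
  calc ((‖x'.1 + u • y'.1‖ + ‖x'.1 - u • y'.1‖) / 2 - 1)
      ≤ ⨆ b : {z : X // ‖z‖ = 1}, ((‖x'.1 + u • b.1‖ + ‖x'.1 - u • b.1‖) / 2 - 1) :=
        le_ciSup hbd1 y'
    _ ≤ _ := le_ciSup hbd2 x'

private lemma ia_smooth {X : Type*} [NormedAddCommGroup X] [NormedSpace ℝ X]
    (q γ : ℝ)
    (hρ : ∀ u : ℝ, 0 < u →
      (⨆ x : {x : X // ‖x‖ = 1}, ⨆ y : {y : X // ‖y‖ = 1},
        ((‖x.1 + u • y.1‖ + ‖x.1 - u • y.1‖) / 2 - 1)) ≤ γ * u ^ q)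
    (x y : X) (hx : x ≠ 0) (hy : y ≠ 0) :
    ‖x + y‖ + ‖x - y‖ ≤ 2 * ‖x‖ + 2 * ‖x‖ * (γ * (‖y‖ / ‖x‖) ^ q) := by
  have ha : (0:ℝ) < ‖x‖ := norm_pos_iff.2 hx
  have hb : (0:ℝ) < ‖y‖ := norm_pos_iff.2 hy
  set a := ‖x‖ with hadef
  set b := ‖y‖ with hbdef
  set u := b / a with hudef
  have hu : 0 < u := div_pos hb ha
  set xh : X := a⁻¹ • x with hxhdef
  set yh : X := b⁻¹ • y with hyhdef
  have hxh : ‖xh‖ = 1 := by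
    rw [hxhdef, norm_smul, norm_inv, Real.norm_of_nonneg ha.le, ← hadef,
      inv_mul_cancel₀ ha.ne']
  have hyh : ‖yh‖ = 1 := by
    rw [hyhdef, norm_smul, norm_inv, Real.norm_of_nonneg hb.le, ← hbdef,
      inv_mul_cancel₀ hb.ne']
  have h1 : a • xh = x := by
    rw [hxhdef, smul_smul, mul_inv_cancel₀ ha.ne', one_smul]
  have h2 : a • (u • yh) = y := by
    rw [hyhdef, smul_smul, smul_smul]
    have : a * u * b⁻¹ = 1 := by
      rw [hudef]; field_simp
    rw [this, one_smul]
  have hplus : ‖x + y‖ = a * ‖xh + u • yh‖ := by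
    conv_lhs => rw [← h1, ← h2, ← smul_add]
    rw [norm_smul, Real.norm_of_nonneg ha.le]
  have hminus : ‖x - y‖ = a * ‖xh - u • yh‖ := by
    conv_lhs => rw [← h1, ← h2, ← smul_sub]
    rw [norm_smul, Real.norm_of_nonneg ha.le]
  have hle : (‖xh + u • yh‖ + ‖xh - u • yh‖) / 2 - 1 ≤ γ * u ^ q :=
    le_trans (ia_val_le_sup u hu ⟨xh, hxh⟩ ⟨yh, hyh⟩) (hρ u hu)
  rw [hplus, hminus]
  nlinarith [hle, ha]

set_option maxHeartbeats 2000000 in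
/-- Convergence of the Incremental Greedy Algorithm IA(ε) in a uniformly smooth Banach
space: if the modulus of smoothness satisfies `ρ(u) ≤ γ u^q` (`1 < q ≤ 2`),
`ε_n = β γ^{1/q} n^{-1/p}` with `p = q/(q-1)`, and `f ∈ A₁(D)`, then the residuals
satisfy `‖f - G_m‖ ≤ C(β) γ^{1/q} m^{-1/p}` for all `m ≥ 1`. -/
theorem stmt15.{u} (q γ β p : ℝ) (hq1 : 1 < q) (hq2 : q ≤ 2) (hγ : 0 < γ) (hβ : 0 < β)
    (hp : p = q / (q - 1)) :
    ∃ C : ℝ, 0 < C ∧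
      ∀ (X : Type u) (_ : NormedAddCommGroup X), ∀ (_ : NormedSpace ℝ X) (_ : CompleteSpace X),
      ∀ D : Set X, (∀ g ∈ D, ‖g‖ ≤ 1) →
      -- modulus of smoothness bound `ρ(u) ≤ γ u^q`
      (∀ u : ℝ, 0 < u →
        (⨆ x : {x : X // ‖x‖ = 1}, ⨆ y : {y : X // ‖y‖ = 1},
          ((‖x.1 + u • y.1‖ + ‖x.1 - u • y.1‖) / 2 - 1)) ≤ γ * u ^ q) →
      ∀ f ∈ closure (convexHull ℝ D),
      ∀ (φ G : ℕ → X) (Fn : ℕ → X →L[ℝ] ℝ),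
        G 0 = 0 →
        (∀ n : ℕ, 1 ≤ n → φ n ∈ D) →
        -- `Fn n` is a norming functional of the residual `f - G n`
        (∀ n : ℕ, ‖Fn n‖ = 1 ∧ Fn n (f - G n) = ‖f - G n‖) →
        -- greedy step with schedule `ε_n = β γ^{1/q} n^{-1/p}`
        (∀ n : ℕ, 1 ≤ n →
          -(β * γ ^ (1 / q) * (n : ℝ) ^ (-(1 / p))) ≤ Fn (n - 1) (φ n - f)) →
        (∀ n : ℕ, 1 ≤ n → G n = (1 - 1 / (n : ℝ)) • G (n - 1) + ((n : ℝ))⁻¹ • φ n) →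
        ∀ m : ℕ, 1 ≤ m → ‖f - G m‖ ≤ C * γ ^ (1 / q) * (m : ℝ) ^ (-(1 / p)) := by
  have hq0 : (0:ℝ) < q := lt_trans one_pos hq1
  have hq0' : q ≠ 0 := ne_of_gt hq0
  have hq1' : q - 1 ≠ 0 := sub_ne_zero_of_ne (ne_of_gt hq1)
  have hppos : 0 < p := by rw [hp]; apply div_pos hq0; linarith
  have h1p : 1 / p = 1 - 1 / q := by
    rw [hp, one_div_div, sub_div, div_self hq0']
  have h1p_pos : 0 < 1 / p := by
    rw [h1p]
    have : 1 / q < 1 := by rw [div_lt_one hq0]; exact hq1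
    linarith
  have h1p_le1 : 1 / p ≤ 1 := by
    rw [h1p]
    have : 0 < 1 / q := by positivity
    linarith
  have h1q_pos : 0 < 1 / q := by positivity
  have h1q_le1 : 1 / q ≤ 1 := by rw [div_le_one hq0]; linarith
  refine ⟨2 * β + 16, by positivity, ?_⟩
  intro X _ _ _ D hD hρ f hf φ G Fn hG0 hφD hFn hgreedy hG
  set C : ℝ := 2 * β + 16 with hCdef
  have hCpos : 0 < C := by positivity
  set K : ℝ := γ ^ (1 / q) with hKdef
  have hKpos : 0 < K := Real.rpow_pos_of_pos hγ _
  have hKq : K ^ q = γ := by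
    rw [hKdef, ← Real.rpow_mul hγ.le, one_div_mul_cancel hq0', Real.rpow_one]
  -- nontrivial X, unit vector
  have hXnt : ∃ e : X, ‖e‖ = 1 := by
    by_contra h
    push_neg at h
    have h0 : ∀ x : X, x = 0 := by
      intro x
      by_contra hx
      refine h (‖x‖⁻¹ • x) ?_
      rw [norm_smul, norm_inv, norm_norm, inv_mul_cancel₀ (norm_ne_zero_iff.2 hx)]
    have hFn0 : Fn 0 = 0 := by
      ext x
      rw [h0 x]
      simp
    have h1 := (hFn 0).1
    rw [hFn0, norm_zero] at h1
    exact zero_ne_one h1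
  obtain ⟨e, he⟩ := hXnt
  have h2q4 : (2:ℝ) ^ q ≤ 4 := by
    calc (2:ℝ) ^ q ≤ (2:ℝ) ^ (2:ℝ) := Real.rpow_le_rpow_of_exponent_le one_le_two hq2
      _ = 4 := by
        rw [show (2:ℝ) = ((2:ℕ):ℝ) from by norm_num]
        rw [Real.rpow_natCast]
        norm_num
  have hγ4 : (1:ℝ) / 4 ≤ γ := by
    have h1 : (1:ℝ) ≤ (‖e + (2:ℝ) • e‖ + ‖e - (2:ℝ) • e‖) / 2 - 1 := by
      have he1 : e + (2:ℝ) • e = (3:ℝ) • e := by module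
      have he2 : e - (2:ℝ) • e = (-1:ℝ) • e := by module
      rw [he1, he2, norm_smul, norm_smul, he]
      norm_num
    have h2 := ia_val_le_sup (2:ℝ) two_pos (⟨e, he⟩ : {z : X // ‖z‖ = 1}) ⟨e, he⟩
    have h3 := hρ 2 two_pos
    have h4 : γ * (2:ℝ) ^ q ≤ γ * 4 := mul_le_mul_of_nonneg_left h2q4 hγ.le
    linarith
  have hK4 : (1:ℝ) / 4 ≤ K := by
    rcases le_or_gt γ 1 with h | h
    · calc (1:ℝ) / 4 ≤ γ := hγ4
        _ = γ ^ (1:ℝ) := (Real.rpow_one γ).symm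
        _ ≤ γ ^ (1 / q) := Real.rpow_le_rpow_of_exponent_ge hγ h h1q_le1
    · have h1 : (1:ℝ) ^ (1 / q) ≤ γ ^ (1 / q) :=
        Real.rpow_le_rpow zero_le_one h.le h1q_pos.le
      rw [Real.one_rpow] at h1
      linarith
  -- basic norm bounds
  have hf1 : ‖f‖ ≤ 1 := by
    have hsub : convexHull ℝ D ⊆ Metric.closedBall (0:X) 1 :=
      convexHull_min
        (fun g hg => by
          simpa [Metric.mem_closedBall, dist_zero_right] using hD g hg)
        (convex_closedBall 0 1)
    have hmem := closure_minimal hsub Metric.isClosed_closedBall hf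
    simpa [Metric.mem_closedBall, dist_zero_right] using hmem
  have hφ1 : ∀ n : ℕ, 1 ≤ n → ‖φ n‖ ≤ 1 := fun n hn => hD _ (hφD n hn)
  have hGle : ∀ n : ℕ, ‖G n‖ ≤ 1 := by
    intro n
    induction n with
    | zero => simp [hG0]
    | succ k ih =>
      rw [hG (k + 1) (by omega)]
      simp only [Nat.add_sub_cancel]
      have hk1 : (0:ℝ) < (k:ℝ) + 1 := by positivity
      have hinv : (((k + 1 : ℕ)):ℝ)⁻¹ = ((k:ℝ) + 1)⁻¹ := by push_cast; ring_nf
      have h1 : (0:ℝ) ≤ 1 - 1 / ((k:ℝ) + 1) := by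
        rw [sub_nonneg]
        rw [div_le_one hk1]
        linarith
      calc ‖(1 - 1 / (((k + 1 : ℕ)):ℝ)) • G k + (((k + 1 : ℕ)):ℝ)⁻¹ • φ (k + 1)‖
          ≤ ‖(1 - 1 / (((k + 1 : ℕ)):ℝ)) • G k‖ + ‖(((k + 1 : ℕ)):ℝ)⁻¹ • φ (k + 1)‖ :=
            norm_add_le _ _
        _ = (1 - 1 / ((k:ℝ) + 1)) * ‖G k‖ + ((k:ℝ) + 1)⁻¹ * ‖φ (k + 1)‖ := by
            rw [norm_smul, norm_smul]
            push_cast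
            rw [Real.norm_of_nonneg h1, Real.norm_of_nonneg (by positivity)]
        _ ≤ (1 - 1 / ((k:ℝ) + 1)) * 1 + ((k:ℝ) + 1)⁻¹ * 1 := by
            apply add_le_add
            · exact mul_le_mul_of_nonneg_left ih h1
            · exact mul_le_mul_of_nonneg_left (hφ1 (k + 1) (by omega)) (by positivity)
        _ = 1 := by field_simp; ring
  have hres2 : ∀ n : ℕ, ‖f - G n‖ ≤ 2 := by
    intro n
    calc ‖f - G n‖ ≤ ‖f‖ + ‖G n‖ := norm_sub_le _ _
      _ ≤ 2 := by linarith [hGle n]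
  -- recursion identity for the residual
  have hrecur : ∀ k : ℕ, f - G (k + 1) = (f - G k) - ((k:ℝ) + 1)⁻¹ • (φ (k + 1) - G k) := by
    intro k
    rw [hG (k + 1) (by omega)]
    simp only [Nat.add_sub_cancel]
    push_cast
    module
  intro m hm
  induction m, hm using Nat.le_induction with
  | base =>
    have h2 : ‖f - G 1‖ ≤ 2 := hres2 1
    rw [Nat.cast_one, Real.one_rpow, mul_one]
    have h3 : C * (1/4) ≤ C * K := mul_le_mul_of_nonneg_left hK4 hCpos.le
    have h4 : (2:ℝ) ≤ C * (1/4) := by rw [hCdef]; linarith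
    exact le_trans h2 (le_trans h4 h3)
  | succ m hm ih =>
    have hMpos : (0:ℝ) < (m:ℝ) := by exact_mod_cast hm
    have hM1 : (1:ℝ) ≤ (m:ℝ) := by exact_mod_cast hm
    have hM1pos : (0:ℝ) < (m:ℝ) + 1 := by linarith
    have hcast : ((m + 1 : ℕ):ℝ) = (m:ℝ) + 1 := by push_cast; ring
    rw [hcast]
    set t : ℝ := ((m:ℝ) + 1) ^ (-(1/p)) with htdef
    have htpos : 0 < t := Real.rpow_pos_of_pos hM1pos _
    set c : ℝ := ((m:ℝ) + 1)⁻¹ with hcdef2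
    have hcpos : 0 < c := by rw [hcdef2]; positivity
    have hcle : c ≤ 1 := by
      rw [hcdef2]
      rw [inv_le_one_iff₀]
      right; linarith
    have hct : c ≤ t := by
      rw [hcdef2, htdef, ← Real.rpow_neg_one ((m:ℝ)+1)]
      apply Real.rpow_le_rpow_of_exponent_le (by linarith)
      linarith
    set a : ℝ := ‖f - G m‖ with hadef
    -- dictionary-element difference bound
    have hg2 : ‖φ (m + 1) - G m‖ ≤ 2 := by
      calc ‖φ (m + 1) - G m‖ ≤ ‖φ (m + 1)‖ + ‖G m‖ := norm_sub_le _ _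
        _ ≤ 2 := by linarith [hφ1 (m + 1) (by omega), hGle m]
    rcases le_or_gt a (C / 2 * K * t) with hcase | hcase
    · -- easy case: residual already small
      have hnormy : ‖((m:ℝ) + 1)⁻¹ • (φ (m + 1) - G m)‖ ≤ 2 * c := by
        rw [norm_smul, Real.norm_of_nonneg (by positivity), hcdef2]
        calc ((m:ℝ) + 1)⁻¹ * ‖φ (m + 1) - G m‖ ≤ ((m:ℝ) + 1)⁻¹ * 2 :=
              mul_le_mul_of_nonneg_left hg2 (by positivity)
          _ = 2 * ((m:ℝ) + 1)⁻¹ := by ring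
      have h1 : ‖f - G (m + 1)‖ ≤ a + 2 * c := by
        rw [hrecur m]
        calc ‖(f - G m) - ((m:ℝ) + 1)⁻¹ • (φ (m + 1) - G m)‖
            ≤ ‖f - G m‖ + ‖((m:ℝ) + 1)⁻¹ • (φ (m + 1) - G m)‖ := norm_sub_le _ _
          _ ≤ a + 2 * c := by rw [← hadef]; linarith
      have hCK2 : (2:ℝ) ≤ C / 2 * K := by
        have h3 : C / 2 * (1/4) ≤ C / 2 * K :=
          mul_le_mul_of_nonneg_left hK4 (by positivity)
        have h4 : (2:ℝ) ≤ C / 2 * (1/4) := by rw [hCdef]; linarith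
        linarith
      have h2 : 2 * c ≤ C / 2 * K * t := by
        calc 2 * c ≤ 2 * t := by linarith
          _ ≤ C / 2 * K * t := mul_le_mul_of_nonneg_right hCK2 htpos.le
      calc ‖f - G (m + 1)‖ ≤ a + 2 * c := h1
        _ ≤ C / 2 * K * t + (C / 2 * K * t) := add_le_add hcase h2
        _ = C * K * t := by ring
    · -- hard case
      have hapos : 0 < a := lt_trans (by positivity) hcase
      by_cases hg0 : φ (m + 1) - G m = 0
      · exfalso
        have h1 := (hFn m).2
        have h2 := hgreedy (m + 1) (by omega)
        simp only [Nat.add_sub_cancel] at h2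
        push_cast at h2
        rw [← htdef] at h2
        have h3 : Fn m (φ (m + 1) - f) = -a := by
          have hid : φ (m + 1) - f = (φ (m + 1) - G m) - (f - G m) := by abel
          rw [hid, map_sub, hg0, map_zero, h1, ← hadef]
          ring
        rw [h3] at h2
        have h4 : a ≤ β * K * t := by linarith
        have h5 : β * K * t < C / 2 * K * t := by
          apply mul_lt_mul_of_pos_right _ htpos
          apply mul_lt_mul_of_pos_right _ hKpos
          rw [hCdef]; linarith
        linarith
      · -- main estimate via smoothness
        have hxne : f - G m ≠ 0 := by
          have h0 : 0 < ‖f - G m‖ := hadef ▸ hapos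
          exact norm_pos_iff.1 h0
        have hyne : c • (φ (m + 1) - G m) ≠ 0 := smul_ne_zero (ne_of_gt hcpos) hg0
        have hsm := ia_smooth q γ hρ (f - G m) (c • (φ (m + 1) - G m)) hxne hyne
        rw [← hadef] at hsm
        set w : ℝ := ‖c • (φ (m + 1) - G m)‖ with hwdef
        have hyn : w ≤ 2 * c := by
          rw [hwdef, norm_smul, Real.norm_of_nonneg hcpos.le]
          calc c * ‖φ (m + 1) - G m‖ ≤ c * 2 := mul_le_mul_of_nonneg_left hg2 hcpos.le
            _ = 2 * c := by ring
        have hwpos : 0 < w := by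
          rw [hwdef]
          exact norm_pos_iff.2 hyne
        -- greedy functional estimate
        have hFg : -(β * K * t) + a ≤ Fn m (φ (m + 1) - G m) := by
          have h2 := hgreedy (m + 1) (by omega)
          simp only [Nat.add_sub_cancel] at h2
          push_cast at h2
          rw [← htdef] at h2
          have hid : φ (m + 1) - G m = (φ (m + 1) - f) + (f - G m) := by abel
          rw [hid, map_add, (hFn m).2, ← hadef]
          linarith
        -- norming functional lower bound for ‖x + y‖
        have hFxy : a + c * Fn m (φ (m + 1) - G m)
            ≤ ‖(f - G m) + c • (φ (m + 1) - G m)‖ := by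
          have hop := (Fn m).le_opNorm ((f - G m) + c • (φ (m + 1) - G m))
          rw [(hFn m).1, one_mul] at hop
          have h1 : Fn m ((f - G m) + c • (φ (m + 1) - G m))
              ≤ ‖(f - G m) + c • (φ (m + 1) - G m)‖ :=
            le_trans (le_abs_self _) (by rw [← Real.norm_eq_abs]; exact hop)
          rw [map_add, map_smul, smul_eq_mul, (hFn m).2, ← hadef] at h1
          exact h1
        have hFgc : c * (-(β * K * t) + a) ≤ c * Fn m (φ (m + 1) - G m) :=
          mul_le_mul_of_nonneg_left hFg hcpos.le
        have hkey : ‖f - G (m + 1)‖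
            ≤ a * (1 - c) + c * (β * K * t) + 2 * a * (γ * (w / a) ^ q) := by
          rw [hrecur m, ← hcdef2]
          linarith [hsm, hFxy, hFgc]
        -- bound the smoothness term by 8 * K * t * c
        have h1' : (w / a) ^ q ≤ (2 * c / a) ^ q := by
          apply Real.rpow_le_rpow (by positivity) _ hq0.le
          apply div_le_div_of_nonneg_right hyn hapos.le
        have h2' : a * (2 * c / a) ^ q = (2 * c) ^ q * a ^ (1 - q) := by
          rw [Real.div_rpow (by positivity) hapos.le, Real.rpow_sub hapos, Real.rpow_one]
          ring
        have h3' : a ^ (1 - q) ≤ (C / 2 * K * t) ^ (1 - q) :=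
          Real.rpow_le_rpow_of_nonpos (by positivity) hcase.le (by linarith)
        have h4' : (C / 2 * K * t) ^ (1 - q)
            = (C / 2) ^ (1 - q) * K ^ (1 - q) * t ^ (1 - q) := by
          rw [Real.mul_rpow (by positivity) htpos.le, Real.mul_rpow (by positivity) hKpos.le]
        have h5' : (2 * c) ^ q = 2 ^ q * ((m:ℝ) + 1) ^ (-q) := by
          rw [Real.mul_rpow (by norm_num) hcpos.le, hcdef2, ← Real.rpow_neg_one ((m:ℝ)+1),
            ← Real.rpow_mul hM1pos.le]
          norm_num
        have h6' : t ^ (1 - q) = ((m:ℝ) + 1) ^ (-(1/p) * (1 - q)) := by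
          rw [htdef, ← Real.rpow_mul hM1pos.le]
        have h7' : γ * K ^ (1 - q) = K := by
          rw [← hKq, ← Real.rpow_add hKpos,
            show q + (1 - q) = (1:ℝ) by ring, Real.rpow_one]
        have hexp : -q + (-(1/p)) * (1 - q) = -(1/p) + (-1) := by
          rw [h1p]; field_simp; ring
        have h8' : ((m:ℝ) + 1) ^ (-q) * ((m:ℝ) + 1) ^ (-(1/p) * (1 - q)) = t * c := by
          rw [← Real.rpow_add hM1pos, hexp, Real.rpow_add hM1pos, Real.rpow_neg_one,
            ← htdef, ← hcdef2]
        have hR : 2 * a * (γ * (w / a) ^ q) ≤ 8 * K * t * c := by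
          have e1 : a * (w / a) ^ q ≤ (2 * c) ^ q * a ^ (1 - q) := by
            rw [← h2']
            exact mul_le_mul_of_nonneg_left h1' hapos.le
          have e2 : (2 * c) ^ q * a ^ (1 - q)
              ≤ (2 * c) ^ q * (C / 2 * K * t) ^ (1 - q) :=
            mul_le_mul_of_nonneg_left h3' (Real.rpow_nonneg (by positivity) q)
          have e3 : 2 * a * (γ * (w / a) ^ q)
              ≤ 2 * γ * ((2 * c) ^ q * (C / 2 * K * t) ^ (1 - q)) := by
            have e1' := mul_le_mul_of_nonneg_left (le_trans e1 e2)
              (by positivity : (0:ℝ) ≤ 2 * γ)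
            calc 2 * a * (γ * (w / a) ^ q) = 2 * γ * (a * (w / a) ^ q) := by ring
              _ ≤ 2 * γ * ((2 * c) ^ q * (C / 2 * K * t) ^ (1 - q)) := e1'
          have e4 : 2 * γ * ((2 * c) ^ q * (C / 2 * K * t) ^ (1 - q))
              = 2 * (2 ^ q) * ((C / 2) ^ (1 - q)) * (γ * K ^ (1 - q))
                * (((m:ℝ) + 1) ^ (-q) * ((m:ℝ) + 1) ^ (-(1/p) * (1 - q))) := by
            rw [h4', h5', h6']; ring
          have e5 : 2 * (2 ^ q) * ((C / 2) ^ (1 - q)) * (γ * K ^ (1 - q))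
                * (((m:ℝ) + 1) ^ (-q) * ((m:ℝ) + 1) ^ (-(1/p) * (1 - q)))
              = 2 * (2 ^ q) * ((C / 2) ^ (1 - q)) * K * (t * c) := by
            rw [h7', h8']
          have hC2le : ((C:ℝ) / 2) ^ (1 - q) ≤ 1 :=
            Real.rpow_le_one_of_one_le_of_nonpos (by rw [hCdef]; linarith) (by linarith)
          have e6 : 2 * (2 ^ q) * ((C / 2) ^ (1 - q)) * K * (t * c)
              ≤ 2 * 4 * 1 * K * (t * c) := by
            gcongr
          calc 2 * a * (γ * (w / a) ^ q)
              ≤ 2 * γ * ((2 * c) ^ q * (C / 2 * K * t) ^ (1 - q)) := e3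
            _ = 2 * (2 ^ q) * ((C / 2) ^ (1 - q)) * K * (t * c) := by rw [e4, e5]
            _ ≤ 2 * 4 * 1 * K * (t * c) := e6
            _ = 8 * K * t * c := by ring
        -- inductive estimate a * (1 - c) ≤ C * K * (t * (1 - c / 2))
        have homc : 1 - c = (m:ℝ) / ((m:ℝ) + 1) := by
          rw [hcdef2]; field_simp; ring
        have homc_nonneg : 0 ≤ 1 - c := by linarith
        have hsm1 : (m:ℝ) ^ (-(1/p)) * (m:ℝ) = (m:ℝ) ^ (1/q) := by
          nth_rewrite 2 [← Real.rpow_one (m:ℝ)]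
          rw [← Real.rpow_add hMpos, show -(1/p) + 1 = 1/q by rw [h1p]; ring]
        have hlemB : t * ((1 - c) ^ (1/q)) = (m:ℝ) ^ (1/q) * ((m:ℝ) + 1)⁻¹ := by
          rw [homc, Real.div_rpow hMpos.le hM1pos.le, htdef]
          rw [div_eq_mul_inv ((m:ℝ) ^ (1/q)) _, ← Real.rpow_neg hM1pos.le]
          rw [show ((m:ℝ)+1) ^ (-(1/p)) * ((m:ℝ) ^ (1/q) * ((m:ℝ)+1) ^ (-(1/q)))
              = (m:ℝ) ^ (1/q) * (((m:ℝ)+1) ^ (-(1/p)) * ((m:ℝ)+1) ^ (-(1/q))) from by ring,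
            ← Real.rpow_add hM1pos, show -(1/p) + -(1/q) = (-1:ℝ) by rw [h1p]; ring,
            Real.rpow_neg_one]
        have h1q2 : (1:ℝ)/2 ≤ 1/q := by
          rw [div_le_div_iff₀ two_pos hq0]
          linarith
        have hbern : (1 - c) ^ (1/q) ≤ 1 - c/2 := by
          have hb1 : (1 + (-c)) ^ (1/q) ≤ 1 + (1/q) * (-c) :=
            rpow_one_add_le_one_add_mul_self (by linarith) h1q_pos.le h1q_le1
          have hb2 : c/2 ≤ (1/q) * c := by
            have := mul_le_mul_of_nonneg_right h1q2 hcpos.le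
            linarith
          have e : (1:ℝ) - c = 1 + (-c) := by ring
          rw [e]
          linarith
        have hs2 : (m:ℝ) ^ (-(1/p)) * (1 - c) ≤ t * (1 - c/2) := by
          have e1 : (m:ℝ) ^ (-(1/p)) * (1 - c) = (m:ℝ) ^ (1/q) * ((m:ℝ) + 1)⁻¹ := by
            rw [homc, show (m:ℝ) ^ (-(1/p)) * ((m:ℝ) / ((m:ℝ)+1))
              = ((m:ℝ) ^ (-(1/p)) * (m:ℝ)) * ((m:ℝ)+1)⁻¹ from by ring, hsm1]
          rw [e1, ← hlemB]
          exact mul_le_mul_of_nonneg_left hbern htpos.le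
        have hs : a * (1 - c) ≤ C * K * (t * (1 - c/2)) := by
          calc a * (1 - c) ≤ (C * K * (m:ℝ) ^ (-(1/p))) * (1 - c) :=
                mul_le_mul_of_nonneg_right ih homc_nonneg
            _ = (C * K) * ((m:ℝ) ^ (-(1/p)) * (1 - c)) := by ring
            _ ≤ (C * K) * (t * (1 - c/2)) :=
                mul_le_mul_of_nonneg_left hs2 (by positivity)
            _ = C * K * (t * (1 - c/2)) := by ring
        calc ‖f - G (m + 1)‖
            ≤ a * (1 - c) + c * (β * K * t) + 2 * a * (γ * (w / a) ^ q) := hkey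
          _ ≤ C * K * (t * (1 - c/2)) + c * (β * K * t) + 8 * K * t * c := by
              linarith [hs, hR]
          _ = C * K * t + K * t * c * (β + 8 - C/2) := by ring
          _ = C * K * t := by rw [hCdef]; ring
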